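/- Assume the serving-link model below, with base station transmit power P_mm > 0 and positive integers M, N. Then the average receive power from the serving base station satisfies E[ N M P_mm β_T (max{R, D})^{−α_T} ] = N M P_mm · 2πρ · { β_LoS D^{−α_LoS} ∫₀^D t f_Pr(t) e^{−2πρ[Θ(t) + Ξ(φ_LoS(t))]} dt + β_LoS ∫_D^∞ t^{1−α_LoS} f_Pr(t) e^{−2πρ[Θ(t) + Ξ(φ_LoS(t))]} dt + β_NLoS D^{−α_NLoS} ∫₀^D t (1 − f_Pr(t)) e^{−2πρ[Θ(φ_NLoS(t)) + Ξ(t)]} dt + β_NLoS ∫_D^∞ t^{1−α_NLoS} (1 − f_Pr(t)) e^{−2πρ[Θ(φ_NLoS(t)) + Ξ(t)]} dt }, and this quantity is a lower bound for the average total receive power (which additionally includes the nonnegative interference contribution). -/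

import Mathlib

open MeasureTheory
open scoped ENNReal

lemma aux_rpow_meas (c e : ℝ) : Measurable fun y : ℝ => c * y ^ e := by
  measurability

lemma aux_oR (p q a b c d : ℝ) (hp : 0 ≤ p) (ha : 0 ≤ a) (hb : 0 ≤ b) (hc : 0 ≤ c)
    (h : p * q = a * b * c * d) :
    ENNReal.ofReal p * ENNReal.ofReal q
      = ENNReal.ofReal a * ENNReal.ofReal b * ENNReal.ofReal c * ENNReal.ofReal d := by
  rw [← ENNReal.ofReal_mul hp, ← ENNReal.ofReal_mul ha,
      ← ENNReal.ofReal_mul (mul_nonneg ha hb),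
      ← ENNReal.ofReal_mul (mul_nonneg (mul_nonneg ha hb) hc), h]

lemma aux_g_meas (c D α : ℝ) : Measurable fun t : ℝ => ENNReal.ofReal (c * max t D ^ α) := by
  measurability

lemma aux_mono_int (f : ℝ → ℝ) (hfm : Measurable f) (hf0 : ∀ t, 0 ≤ f t) (hf1 : ∀ t, f t ≤ 1) :
    Monotone (fun y => ∫ t in Set.Ioc (0 : ℝ) y, t * f t) := by
  intro a b hab
  rcases le_or_gt b 0 with hb | hb
  · have ha : a ≤ 0 := hab.trans hb
    simp only [Set.Ioc_eq_empty (not_lt.mpr ha), Set.Ioc_eq_empty (not_lt.mpr hb),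
      Measure.restrict_empty, integral_zero_measure, le_refl]
  · have hint : IntegrableOn (fun t => t * f t) (Set.Ioc 0 b) := by
      apply Integrable.mono' (integrableOn_const (C := b) measure_Ioc_lt_top.ne)
        ((measurable_id.mul hfm).aestronglyMeasurable)
      refine (ae_restrict_iff' measurableSet_Ioc).mpr (Filter.Eventually.of_forall ?_)
      intro t ht
      simp only [Pi.mul_apply, id_eq]
      rw [Real.norm_eq_abs, abs_of_nonneg (mul_nonneg ht.1.le (hf0 t))]
      calc t * f t ≤ t * 1 := mul_le_mul_of_nonneg_left (hf1 t) ht.1.le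
        _ = t := mul_one t
        _ ≤ b := ht.2
    refine setIntegral_mono_set hint ?_
      ((Set.Ioc_subset_Ioc_right hab).eventuallyLE)
    exact (ae_restrict_iff' measurableSet_Ioc).mpr
      (Filter.Eventually.of_forall fun t ht => mul_nonneg ht.1.le (hf0 t))

lemma aux_branch {Ω : Type*} [MeasurableSpace Ω] (μ : Measure Ω)
    (R : Ω → ℝ) (T : Ω → Bool) (hRm : Measurable R) (hR0 : ∀ ω, 0 ≤ R ω)
    (b : Bool) (dens : ℝ → ℝ) (hdm : Measurable dens) (hneg : ∀ t, t ≤ 0 → dens t ≤ 0)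
    (hlaw : ∀ A : Set ℝ, MeasurableSet A → A ⊆ Set.Ici 0 →
      μ {ω | R ω ∈ A ∧ T ω = b} = ∫⁻ t in A, ENNReal.ofReal (dens t))
    (g : ℝ → ℝ≥0∞) (hg : Measurable g) :
    ∫⁻ ω in {ω | T ω = b}, g (R ω) ∂μ
      = ∫⁻ t in Set.Ioi (0 : ℝ), ENNReal.ofReal (dens t) * g t := by
  have hof : Measurable (fun t => ENNReal.ofReal (dens t)) :=
    ENNReal.measurable_ofReal.comp hdm
  have hmap : Measure.map R (μ.restrict {ω | T ω = b})
      = volume.withDensity (fun t => ENNReal.ofReal (dens t)) := by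
    ext A hA
    rw [Measure.map_apply hRm hA, Measure.restrict_apply (hRm hA),
      withDensity_apply _ hA]
    have hsets : R ⁻¹' A ∩ {ω | T ω = b}
        = {ω | R ω ∈ A ∩ Set.Ici 0 ∧ T ω = b} := by
      ext ω
      simp [Set.mem_preimage, Set.mem_setOf_eq, Set.mem_Ici, hR0 ω, and_assoc]
    rw [hsets, hlaw _ (hA.inter measurableSet_Ici) Set.inter_subset_right]
    have hA' : A = (A ∩ Set.Ici 0) ∪ (A ∩ Set.Iio 0) := by
      ext x
      simp only [Set.mem_union, Set.mem_inter_iff, Set.mem_Ici, Set.mem_Iio]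
      constructor
      · intro h
        exact (le_or_gt 0 x).imp (fun h0 => ⟨h, h0⟩) (fun h0 => ⟨h, h0⟩)
      · rintro (⟨h, -⟩ | ⟨h, -⟩) <;> exact h
    have hdisj : Disjoint (A ∩ Set.Ici (0 : ℝ)) (A ∩ Set.Iio 0) :=
      Set.disjoint_left.mpr fun x hx hx' =>
        absurd (Set.mem_Ici.mp hx.2) (not_le.mpr (Set.mem_Iio.mp hx'.2))
    conv_rhs => rw [hA']
    rw [lintegral_union (hA.inter measurableSet_Iio) hdisj]
    have hz : ∫⁻ t in A ∩ Set.Iio 0, ENNReal.ofReal (dens t) = 0 := by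
      rw [setLIntegral_congr_fun (hA.inter measurableSet_Iio)
        (fun t ht =>
          ENNReal.ofReal_eq_zero.mpr (hneg t ht.2.le))]
      simp
    rw [hz, add_zero]
  calc ∫⁻ ω in {ω | T ω = b}, g (R ω) ∂μ
      = ∫⁻ t, g t ∂(Measure.map R (μ.restrict {ω | T ω = b})) :=
        (lintegral_map hg hRm).symm
    _ = ∫⁻ t, ENNReal.ofReal (dens t) * g t ∂volume := by
        rw [hmap, lintegral_withDensity_eq_lintegral_mul volume hof hg]
        rfl
    _ = ∫⁻ t in Set.Ioi (0 : ℝ), ENNReal.ofReal (dens t) * g t := by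
        rw [← lintegral_add_compl (fun t => ENNReal.ofReal (dens t) * g t)
          (measurableSet_Ioi (a := (0 : ℝ)))]
        have hz : ∫⁻ t in (Set.Ioi (0 : ℝ))ᶜ, ENNReal.ofReal (dens t) * g t = 0 := by
          rw [Set.compl_Ioi,
            setLIntegral_congr_fun measurableSet_Iic
            (fun t (ht : t ≤ 0) => by
              rw [ENNReal.ofReal_eq_zero.mpr (hneg t ht), zero_mul])]
          simp
        rw [hz, add_zero]

set_option maxHeartbeats 1000000 in
theorem average_serving_power {Ω : Type*} [MeasurableSpace Ω]
    (μ : Measure Ω) [IsProbabilityMeasure μ]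
    -- serving-link model
    (ρ : ℝ) (hρ : 0 < ρ)
    (fPr : ℝ → ℝ) (hfm : Measurable fPr) (hf0 : ∀ t, 0 ≤ fPr t) (hf1 : ∀ t, fPr t ≤ 1)
    (βL βN αL αN : ℝ) (hβL : 0 < βL) (hβN : 0 < βN) (hαL : 0 < αL) (hαN : 0 < αN)
    (Θ Ξ φLoS φNLoS : ℝ → ℝ)
    (hΘ : ∀ y, Θ y = ∫ t in Set.Ioc (0 : ℝ) y, t * fPr t)
    (hΞ : ∀ y, Ξ y = ∫ t in Set.Ioc (0 : ℝ) y, t * (1 - fPr t))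
    (hφL : ∀ y, φLoS y = (βN / βL) ^ (1 / αN) * y ^ (αL / αN))
    (hφN : ∀ y, φNLoS y = (βL / βN) ^ (1 / αL) * y ^ (αN / αL))
    (densL densN : ℝ → ℝ)
    (hdL : ∀ t, densL t = 2 * Real.pi * ρ * t * fPr t *
      Real.exp (-(2 * Real.pi * ρ) * (Θ t + Ξ (φLoS t))))
    (hdN : ∀ t, densN t = 2 * Real.pi * ρ * t * (1 - fPr t) *
      Real.exp (-(2 * Real.pi * ρ) * (Θ (φNLoS t) + Ξ t)))
    (R : Ω → ℝ) (T : Ω → Bool) (hRm : Measurable R) (hTm : Measurable T)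
    (hR0 : ∀ ω, 0 ≤ R ω)
    (hlawL : ∀ A : Set ℝ, MeasurableSet A → A ⊆ Set.Ici 0 →
      μ {ω | R ω ∈ A ∧ T ω = true} = ∫⁻ t in A, ENNReal.ofReal (densL t))
    (hlawN : ∀ A : Set ℝ, MeasurableSet A → A ⊆ Set.Ici 0 →
      μ {ω | R ω ∈ A ∧ T ω = false} = ∫⁻ t in A, ENNReal.ofReal (densN t))
    -- power transfer model
    (M N : ℕ) (hM : 0 < M) (hN : 0 < N) (Pmm D : ℝ) (hPmm : 0 < Pmm) (hD : 0 < D)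
    (En1 : Ω → ℝ)
    (hEn1 : ∀ ω, En1 ω = N * M * Pmm * (if T ω then βL else βN) *
      (max (R ω) D) ^ (-(if T ω then αL else αN))) :
    (∫⁻ ω, ENNReal.ofReal (En1 ω) ∂μ)
        = ENNReal.ofReal ((N : ℝ) * M * Pmm) * ENNReal.ofReal (2 * Real.pi * ρ) *
          (ENNReal.ofReal (βL * D ^ (-αL)) *
              (∫⁻ t in Set.Ioc (0 : ℝ) D, ENNReal.ofReal (t * fPr t *
                Real.exp (-(2 * Real.pi * ρ) * (Θ t + Ξ (φLoS t)))))
            + ENNReal.ofReal βL *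
              (∫⁻ t in Set.Ioi D, ENNReal.ofReal (t ^ (1 - αL) * fPr t *
                Real.exp (-(2 * Real.pi * ρ) * (Θ t + Ξ (φLoS t)))))
            + ENNReal.ofReal (βN * D ^ (-αN)) *
              (∫⁻ t in Set.Ioc (0 : ℝ) D, ENNReal.ofReal (t * (1 - fPr t) *
                Real.exp (-(2 * Real.pi * ρ) * (Θ (φNLoS t) + Ξ t))))
            + ENNReal.ofReal βN *
              (∫⁻ t in Set.Ioi D, ENNReal.ofReal (t ^ (1 - αN) * (1 - fPr t) *
                Real.exp (-(2 * Real.pi * ρ) * (Θ (φNLoS t) + Ξ t)))))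
      ∧ ∀ En2 : Ω → ℝ, (∀ ω, 0 ≤ En2 ω) →
          (∫⁻ ω, ENNReal.ofReal (En1 ω) ∂μ)
            ≤ ∫⁻ ω, ENNReal.ofReal (En1 ω + En2 ω) ∂μ := by
  constructor
  · -- measurability of Θ, Ξ, φ's, dens's
    have hΘm : Measurable Θ := by
      have : Θ = fun y => ∫ t in Set.Ioc (0 : ℝ) y, t * fPr t := funext hΘ
      rw [this]; exact (aux_mono_int fPr hfm hf0 hf1).measurable
    have hΞm : Measurable Ξ := by
      have : Ξ = fun y => ∫ t in Set.Ioc (0 : ℝ) y, t * (1 - fPr t) := funext hΞ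
      rw [this]
      exact (aux_mono_int _ (measurable_const.sub hfm)
        (fun t => sub_nonneg.mpr (hf1 t))
        (fun t => by show 1 - fPr t ≤ 1; linarith [hf0 t])).measurable
    have hφLm : Measurable φLoS := by
      have : φLoS = fun y => (βN / βL) ^ (1 / αN) * y ^ (αL / αN) := funext hφL
      rw [this]; exact aux_rpow_meas _ _
    have hφNm : Measurable φNLoS := by
      have : φNLoS = fun y => (βL / βN) ^ (1 / αL) * y ^ (αN / αL) := funext hφN
      rw [this]; exact aux_rpow_meas _ _
    have hdLm : Measurable densL := by
      have : densL = fun t => 2 * Real.pi * ρ * t * fPr t *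
          Real.exp (-(2 * Real.pi * ρ) * (Θ t + Ξ (φLoS t))) := funext hdL
      rw [this]
      exact (((measurable_const.mul measurable_id).mul hfm).mul
        (Real.measurable_exp.comp (measurable_const.mul (hΘm.add (hΞm.comp hφLm)))))
    have hdNm : Measurable densN := by
      have : densN = fun t => 2 * Real.pi * ρ * t * (1 - fPr t) *
          Real.exp (-(2 * Real.pi * ρ) * (Θ (φNLoS t) + Ξ t)) := funext hdN
      rw [this]
      exact (((measurable_const.mul measurable_id).mul (measurable_const.sub hfm)).mul
        (Real.measurable_exp.comp (measurable_const.mul ((hΘm.comp hφNm).add hΞm))))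
    have hc : (0 : ℝ) ≤ 2 * Real.pi * ρ := by positivity
    have hnegL : ∀ t, t ≤ 0 → densL t ≤ 0 := by
      intro t ht
      rw [hdL t]
      have h1 : 2 * Real.pi * ρ * t ≤ 0 := mul_nonpos_of_nonneg_of_nonpos hc ht
      have h2 : 2 * Real.pi * ρ * t * fPr t ≤ 0 :=
        mul_nonpos_of_nonpos_of_nonneg h1 (hf0 t)
      exact mul_nonpos_of_nonpos_of_nonneg h2 (Real.exp_pos _).le
    have hnegN : ∀ t, t ≤ 0 → densN t ≤ 0 := by
      intro t ht
      rw [hdN t]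
      have h1 : 2 * Real.pi * ρ * t ≤ 0 := mul_nonpos_of_nonneg_of_nonpos hc ht
      have h2 : 2 * Real.pi * ρ * t * (1 - fPr t) ≤ 0 :=
        mul_nonpos_of_nonpos_of_nonneg h1 (sub_nonneg.mpr (hf1 t))
      exact mul_nonpos_of_nonpos_of_nonneg h2 (Real.exp_pos _).le
    set C : ℝ := (N : ℝ) * M * Pmm with hCdef
    have hC : 0 ≤ C := by positivity
    set gL : ℝ → ENNReal := fun t => ENNReal.ofReal (C * βL * max t D ^ (-αL)) with hgL
    set gN : ℝ → ENNReal := fun t => ENNReal.ofReal (C * βN * max t D ^ (-αN)) with hgN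
    have hgLm : Measurable gL := by
      have : gL = fun t => ENNReal.ofReal ((C * βL) * max t D ^ (-αL)) := by
        funext t; rw [hgL]
      rw [this]; exact aux_g_meas _ _ _
    have hgNm : Measurable gN := by
      have : gN = fun t => ENNReal.ofReal ((C * βN) * max t D ^ (-αN)) := by
        funext t; rw [hgN]
      rw [this]; exact aux_g_meas _ _ _
    have hSm : MeasurableSet {ω | T ω = true} := hTm (measurableSet_singleton true)
    have hScompl : {ω | T ω = true}ᶜ = {ω | T ω = false} := by
      ext ω; simp
    -- split total integral
    rw [← lintegral_add_compl (fun ω => ENNReal.ofReal (En1 ω)) hSm, hScompl]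
    have hL1 : ∫⁻ ω in {ω | T ω = true}, ENNReal.ofReal (En1 ω) ∂μ
        = ∫⁻ ω in {ω | T ω = true}, gL (R ω) ∂μ := by
      refine setLIntegral_congr_fun hSm (fun ω hω => ?_)
      have hω' : T ω = true := hω
      simp [hgL, hEn1 ω, hω', hCdef]
    have hN1 : ∫⁻ ω in {ω | T ω = false}, ENNReal.ofReal (En1 ω) ∂μ
        = ∫⁻ ω in {ω | T ω = false}, gN (R ω) ∂μ := by
      refine setLIntegral_congr_fun (hTm (measurableSet_singleton false))
        (fun ω hω => ?_)
      have hω' : T ω = false := hω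
      simp [hgN, hEn1 ω, hω', hCdef]
    rw [hL1, hN1,
      aux_branch μ R T hRm hR0 true densL hdLm hnegL hlawL gL hgLm,
      aux_branch μ R T hRm hR0 false densN hdNm hnegN hlawN gN hgNm]
    -- split Ioi 0 into Ioc 0 D and Ioi D
    have hsplit : Set.Ioi (0 : ℝ) = Set.Ioc 0 D ∪ Set.Ioi D :=
      (Set.Ioc_union_Ioi_eq_Ioi hD.le).symm
    have hdisj : Disjoint (Set.Ioc (0 : ℝ) D) (Set.Ioi D) :=
      Set.Ioc_disjoint_Ioi le_rfl
    rw [hsplit, lintegral_union measurableSet_Ioi hdisj,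
      lintegral_union measurableSet_Ioi hdisj]
    -- pointwise rewrites on each of the four pieces
    have hpc1 : ∫⁻ t in Set.Ioc (0 : ℝ) D, ENNReal.ofReal (densL t) * gL t
        = (ENNReal.ofReal C * ENNReal.ofReal (2 * Real.pi * ρ) *
            ENNReal.ofReal (βL * D ^ (-αL))) *
          ∫⁻ t in Set.Ioc (0 : ℝ) D, ENNReal.ofReal (t * fPr t *
            Real.exp (-(2 * Real.pi * ρ) * (Θ t + Ξ (φLoS t)))) := by
      rw [← lintegral_const_mul' _ _ (by finiteness)]
      refine setLIntegral_congr_fun measurableSet_Ioc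
        (fun t ht => ?_)
      have hmax : max t D = D := max_eq_right ht.2
      simp only [hdL t, hgL, hmax]
      exact aux_oR _ _ _ _ _ _
        (mul_nonneg (mul_nonneg (mul_nonneg hc ht.1.le) (hf0 t)) (Real.exp_pos _).le)
        hC hc (by positivity) (by ring)
    have hpc2 : ∫⁻ t in Set.Ioi D, ENNReal.ofReal (densL t) * gL t
        = (ENNReal.ofReal C * ENNReal.ofReal (2 * Real.pi * ρ) *
            ENNReal.ofReal βL) *
          ∫⁻ t in Set.Ioi D, ENNReal.ofReal (t ^ (1 - αL) * fPr t *
            Real.exp (-(2 * Real.pi * ρ) * (Θ t + Ξ (φLoS t)))) := by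
      rw [← lintegral_const_mul' _ _ (by finiteness)]
      refine setLIntegral_congr_fun measurableSet_Ioi
        (fun t (ht : D < t) => ?_)
      have ht0 : (0 : ℝ) < t := hD.trans ht
      have hmax : max t D = t := max_eq_left ht.le
      have hrp : t ^ (1 - αL) = t * t ^ (-αL) := by
        rw [sub_eq_add_neg, Real.rpow_add ht0, Real.rpow_one]
      simp only [hdL t, hgL, hmax]
      refine aux_oR _ _ _ _ _ _
        (mul_nonneg (mul_nonneg (mul_nonneg hc ht0.le) (hf0 t)) (Real.exp_pos _).le)
        hC hc hβL.le ?_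
      rw [hrp]; ring
    have hpc3 : ∫⁻ t in Set.Ioc (0 : ℝ) D, ENNReal.ofReal (densN t) * gN t
        = (ENNReal.ofReal C * ENNReal.ofReal (2 * Real.pi * ρ) *
            ENNReal.ofReal (βN * D ^ (-αN))) *
          ∫⁻ t in Set.Ioc (0 : ℝ) D, ENNReal.ofReal (t * (1 - fPr t) *
            Real.exp (-(2 * Real.pi * ρ) * (Θ (φNLoS t) + Ξ t))) := by
      rw [← lintegral_const_mul' _ _ (by finiteness)]
      refine setLIntegral_congr_fun measurableSet_Ioc
        (fun t ht => ?_)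
      have hmax : max t D = D := max_eq_right ht.2
      simp only [hdN t, hgN, hmax]
      exact aux_oR _ _ _ _ _ _
        (mul_nonneg (mul_nonneg (mul_nonneg hc ht.1.le)
          (sub_nonneg.mpr (hf1 t))) (Real.exp_pos _).le)
        hC hc (by positivity) (by ring)
    have hpc4 : ∫⁻ t in Set.Ioi D, ENNReal.ofReal (densN t) * gN t
        = (ENNReal.ofReal C * ENNReal.ofReal (2 * Real.pi * ρ) *
            ENNReal.ofReal βN) *
          ∫⁻ t in Set.Ioi D, ENNReal.ofReal (t ^ (1 - αN) * (1 - fPr t) *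
            Real.exp (-(2 * Real.pi * ρ) * (Θ (φNLoS t) + Ξ t))) := by
      rw [← lintegral_const_mul' _ _ (by finiteness)]
      refine setLIntegral_congr_fun measurableSet_Ioi
        (fun t (ht : D < t) => ?_)
      have ht0 : (0 : ℝ) < t := hD.trans ht
      have hmax : max t D = t := max_eq_left ht.le
      have hrp : t ^ (1 - αN) = t * t ^ (-αN) := by
        rw [sub_eq_add_neg, Real.rpow_add ht0, Real.rpow_one]
      simp only [hdN t, hgN, hmax]
      refine aux_oR _ _ _ _ _ _
        (mul_nonneg (mul_nonneg (mul_nonneg hc ht0.le)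
          (sub_nonneg.mpr (hf1 t))) (Real.exp_pos _).le)
        hC hc hβN.le ?_
      rw [hrp]; ring
    rw [hpc1, hpc2, hpc3, hpc4]
    ring
  · intro En2 h2
    exact lintegral_mono fun ω =>
      ENNReal.ofReal_le_ofReal (le_add_of_nonneg_right (h2 ω))
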